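/- Let f be μ-strongly convex with μ ≥ 0 and let w satisfy f(w) + (1/(2λ))‖w - x‖² ≤ ε²/(2λ) + f_λ(x) (a type-1 ε-approximation of prox_{λf}(x)). Then for all y ∈ H, ε²/(2λ) + f(y) ≥ f(w) + (1/λ)⟨σ + w - x, w - y⟩ + (μ/2)‖w - y‖² + ((1+λμ)/(2λ))‖w - prox_{λf}(x)‖², where σ = (1 + λμ)(prox_{λf}(x) - w). In particular ‖w - prox_{λf}(x)‖ ≤ ε/√(1 + λμ). -/

import Mathlib

open RealInnerProductSpace

/-- Key inequality for type-1 inexact proximal steps (Lemma 2.5 / [Lin2020, Lemma 2.7]). -/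
theorem stmt_9 {H : Type*} [NormedAddCommGroup H] [InnerProductSpace ℝ H]
    (μ : ℝ) (hμ : 0 ≤ μ)
    (f : H → ℝ) (hf : StrongConvexOn Set.univ μ f) (hlsc : LowerSemicontinuous f)
    (lam ε : ℝ) (hlam : 0 < lam) (hε : 0 < ε) (x w p : H)
    (hp : IsMinOn (fun y => f y + ‖y - x‖ ^ 2 / (2 * lam)) Set.univ p)
    (hw : f w + ‖w - x‖ ^ 2 / (2 * lam)
      ≤ ε ^ 2 / (2 * lam) + ⨅ y : H, f y + ‖y - x‖ ^ 2 / (2 * lam)) :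
    (∀ y : H,
      ε ^ 2 / (2 * lam) + f y
        ≥ f w + (1 / lam) * ⟪(1 + lam * μ) • (p - w) + w - x, w - y⟫
          + μ / 2 * ‖w - y‖ ^ 2 + (1 + lam * μ) / (2 * lam) * ‖w - p‖ ^ 2) ∧
    ‖w - p‖ ≤ ε / Real.sqrt (1 + lam * μ) := by
  set F : H → ℝ := fun y => f y + ‖y - x‖ ^ 2 / (2 * lam) with hFdef
  -- strong convexity of the quadratic part
  have hq : UniformConvexOn Set.univ (fun r => (1/lam)/2 * r^2)
      (fun y => ‖y - x‖ ^ 2 / (2 * lam)) := by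
    refine ⟨convex_univ, fun u _ v _ a b ha hb hab => ?_⟩
    obtain rfl : b = 1 - a := by linarith
    have hv : a • u + (1-a) • v - x = a • (u - x) + (1-a) • (v - x) := by
      match_scalars <;> ring
    have huv : u - v = (u - x) - (v - x) := by abel
    simp only [smul_eq_mul]
    rw [hv, huv]
    apply le_of_eq
    rw [norm_add_sq_real (a • (u - x)) ((1-a) • (v - x)), norm_sub_sq_real (u - x) (v - x),
      real_inner_smul_left, real_inner_smul_right, norm_smul, norm_smul,
      Real.norm_eq_abs, Real.norm_eq_abs, abs_of_nonneg ha, abs_of_nonneg hb]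
    field_simp
    ring
  -- strong convexity of F
  have hF : UniformConvexOn Set.univ (fun r => (μ + 1/lam)/2 * r^2) F := by
    have h := UniformConvexOn.add hf hq
    have e1 : ((fun r => μ/2*r^2) + (fun r => (1/lam)/2*r^2) : ℝ → ℝ)
        = fun r => (μ + 1/lam)/2 * r^2 := by
      funext r; simp only [Pi.add_apply]; ring
    have e2 : (f + fun y => ‖y - x‖ ^ 2 / (2 * lam)) = F := rfl
    rw [e1, e2] at h
    exact h
  have hpmin : ∀ y : H, F p ≤ F y := fun y => hp (Set.mem_univ y)
  -- minimizer inequality with full modulus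
  have hmin : ∀ y : H, F p + (μ + 1/lam)/2 * ‖y - p‖ ^ 2 ≤ F y := by
    intro y
    set k : ℝ := (μ + 1/lam)/2 * ‖y - p‖ ^ 2 with hk
    have key : ∀ a ∈ Set.Ioo (0:ℝ) 1, F p + (1-a) * k ≤ F y := by
      intro a ha
      obtain ⟨ha0, ha1⟩ := ha
      have hb : (0:ℝ) ≤ 1 - a := by linarith
      have h := hF.2 (Set.mem_univ y) (Set.mem_univ p) ha0.le hb (by ring)
      simp only [smul_eq_mul] at h
      rw [← hk] at h
      have hpm := hpmin (a • y + (1-a) • p)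
      have h2 : a * (F p + (1-a) * k) ≤ a * F y := by nlinarith [hpm, h]
      exact (mul_le_mul_iff_right₀ ha0).mp h2
    have hcont : Filter.Tendsto (fun a : ℝ => F p + (1-a) * k)
        (nhdsWithin 0 (Set.Ioi 0)) (nhds (F p + (1-(0:ℝ)) * k)) :=
      ((continuous_const.add ((continuous_const.sub continuous_id).mul
        continuous_const)).tendsto 0).mono_left nhdsWithin_le_nhds
    have hev : ∀ᶠ a in nhdsWithin (0:ℝ) (Set.Ioi 0), F p + (1-a) * k ≤ F y := by
      filter_upwards [Ioo_mem_nhdsGT_of_mem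
        (by constructor <;> norm_num : (0:ℝ) ∈ Set.Ico (0:ℝ) 1)] with a ha using key a ha
    have := le_of_tendsto hcont hev
    simpa using this
  -- infimum equals F p
  have hbdd : BddBelow (Set.range F) := ⟨F p, by rintro _ ⟨y, rfl⟩; exact hpmin y⟩
  have hInf : (⨅ y : H, F y) = F p :=
    le_antisymm (ciInf_le hbdd p) (le_ciInf fun y => hpmin y)
  rw [hInf] at hw
  have hc : (0:ℝ) < 1 + lam * μ := by nlinarith
  constructor
  · intro y
    have h1 := hmin y
    have htot : ε ^ 2 / (2 * lam) + f y
        ≥ f w + ‖w - x‖ ^ 2 / (2 * lam) - ‖y - x‖ ^ 2 / (2 * lam)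
          + (μ + 1/lam)/2 * ‖y - p‖ ^ 2 := by
      simp only [hFdef] at h1 hw
      linarith
    have hip : ⟪(1 + lam * μ) • (p - w) + w - x, w - y⟫
        = ⟪w - x, w - y⟫ - (1 + lam * μ) * ⟪w - p, w - y⟫ := by
      have : (1 + lam * μ) • (p - w) + w - x = (w - x) - (1 + lam * μ) • (w - p) := by
        match_scalars <;> ring
      rw [this, inner_sub_left, real_inner_smul_left]
    have hny : ‖y - x‖ ^ 2 = ‖w - x‖ ^ 2 - 2 * ⟪w - x, w - y⟫ + ‖w - y‖ ^ 2 := by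
      rw [show y - x = (w - x) - (w - y) by abel, norm_sub_sq_real]
    have hnp : ‖y - p‖ ^ 2 = ‖w - p‖ ^ 2 - 2 * ⟪w - p, w - y⟫ + ‖w - y‖ ^ 2 := by
      rw [show y - p = (w - p) - (w - y) by abel, norm_sub_sq_real]
    have heq : f w + (1 / lam) * ⟪(1 + lam * μ) • (p - w) + w - x, w - y⟫
          + μ / 2 * ‖w - y‖ ^ 2 + (1 + lam * μ) / (2 * lam) * ‖w - p‖ ^ 2
        = f w + ‖w - x‖ ^ 2 / (2 * lam) - ‖y - x‖ ^ 2 / (2 * lam)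
          + (μ + 1/lam)/2 * ‖y - p‖ ^ 2 := by
      rw [hip, hny, hnp]
      field_simp
      ring
    linarith [htot, heq.ge, heq.le]
  · have h1 := hmin w
    have hsq : ‖w - p‖ ^ 2 ≤ ε ^ 2 / (1 + lam * μ) := by
      rw [le_div_iff₀ hc]
      have hx2 : (μ + 1/lam)/2 * ‖w - p‖ ^ 2 ≤ ε ^ 2 / (2 * lam) := by linarith
      rw [← sub_nonneg]
      have heq2 : ε ^ 2 - ‖w - p‖ ^ 2 * (1 + lam * μ)
          = 2 * lam * (ε ^ 2 / (2 * lam) - (μ + 1/lam)/2 * ‖w - p‖ ^ 2) := by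
        field_simp; ring
      rw [heq2]
      exact mul_nonneg (by linarith) (by linarith)
    calc ‖w - p‖ = Real.sqrt (‖w - p‖ ^ 2) := (Real.sqrt_sq (norm_nonneg _)).symm
      _ ≤ Real.sqrt (ε ^ 2 / (1 + lam * μ)) := Real.sqrt_le_sqrt hsq
      _ = ε / Real.sqrt (1 + lam * μ) := by
          rw [Real.sqrt_div (sq_nonneg ε), Real.sqrt_sq hε.le]
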